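/- arXiv:2102.09924 — 2 statements merged into one kernel-verified Lean document; each statement's English description precedes it below -/
import Mathlib

section
/- In the one-hidden-layer ReLU ANN setting with constant target α, the inner product of the gradient of the Lyapunov function V(φ) = ‖φ‖² + (φ_{3H+1} − 2α)² with the generalized gradient G(φ) equals eight times the risk: ⟨(∇V)(φ), G(φ)⟩ = 8 L_∞(φ) for every φ ∈ ℝ^{3H+1}. -/
open MeasureTheory

noncomputable section

/-- weight parameters -/
def wp (H : ℕ) (φ : EuclideanSpace ℝ (Fin (3*H+1))) (j : Fin H) : ℝ := φ ⟨j.1, by omega⟩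
/-- bias parameters -/
def bp (H : ℕ) (φ : EuclideanSpace ℝ (Fin (3*H+1))) (j : Fin H) : ℝ := φ ⟨H + j.1, by omega⟩
/-- outer weight parameters -/
def vp (H : ℕ) (φ : EuclideanSpace ℝ (Fin (3*H+1))) (j : Fin H) : ℝ := φ ⟨2*H + j.1, by omega⟩
/-- output bias -/
def cp (H : ℕ) (φ : EuclideanSpace ℝ (Fin (3*H+1))) : ℝ := φ ⟨3*H, by omega⟩

/-- realization of the one-hidden-layer ReLU network -/
def realization (H : ℕ) (φ : EuclideanSpace ℝ (Fin (3*H+1))) (x : ℝ) : ℝ :=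
  cp H φ + ∑ j : Fin H, vp H φ j * max (wp H φ j * x + bp H φ j) 0

/-- risk with constant target α -/
def risk (H : ℕ) (α : ℝ) (φ : EuclideanSpace ℝ (Fin (3*H+1))) : ℝ :=
  ∫ y in (0:ℝ)..1, (realization H φ y - α)^2

/-- activity interval I_j^φ -/
def actSet (H : ℕ) (φ : EuclideanSpace ℝ (Fin (3*H+1))) (j : Fin H) : Set ℝ :=
  {x | x ∈ Set.Icc (0:ℝ) 1 ∧ 0 < wp H φ j * x + bp H φ j}

/-- generalized gradient G -/
def grad (H : ℕ) (α : ℝ) (φ : EuclideanSpace ℝ (Fin (3*H+1))) :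
    EuclideanSpace ℝ (Fin (3*H+1)) := WithLp.toLp 2 fun i =>
  if h : i.1 < H then
    2 * vp H φ ⟨i.1, h⟩ * ∫ x in actSet H φ ⟨i.1, h⟩, x * (realization H φ x - α)
  else if h2 : i.1 < 2*H then
    2 * vp H φ ⟨i.1 - H, by omega⟩ * ∫ x in actSet H φ ⟨i.1 - H, by omega⟩, (realization H φ x - α)
  else if h3 : i.1 < 3*H then
    2 * ∫ x in (0:ℝ)..1,
      max (wp H φ ⟨i.1 - 2*H, by omega⟩ * x + bp H φ ⟨i.1 - 2*H, by omega⟩) 0 * (realization H φ x - α)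
  else 2 * ∫ x in (0:ℝ)..1, (realization H φ x - α)

/-- Lyapunov function V -/
def lyap (H : ℕ) (α : ℝ) (φ : EuclideanSpace ℝ (Fin (3*H+1))) : ℝ :=
  ‖φ‖^2 + (cp H φ - 2*α)^2

set_option maxHeartbeats 1000000

section Aux

variable (H : ℕ) (α : ℝ) (φ : EuclideanSpace ℝ (Fin (3*H+1)))

lemma grad_lyap :
    gradient (lyap H α) φ = (2:ℝ) • φ +
      (2*(cp H φ - 2*α)) • EuclideanSpace.single ⟨3*H, by omega⟩ (1:ℝ) := by
  apply HasGradientAt.gradient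
  rw [hasGradientAt_iff_hasFDerivAt]
  have h1 : HasFDerivAt (fun ψ : EuclideanSpace ℝ (Fin (3*H+1)) => ‖ψ‖^2)
      ((2:ℕ) • (innerSL ℝ φ)) φ := by
    simpa using (hasFDerivAt_id φ).norm_sq
  have hproj : HasFDerivAt (fun ψ : EuclideanSpace ℝ (Fin (3*H+1)) => cp H ψ - 2*α)
      ((EuclideanSpace.proj (⟨3*H, by omega⟩ : Fin (3*H+1)) : EuclideanSpace ℝ (Fin (3*H+1)) →L[ℝ] ℝ)) φ :=
    by exact ((EuclideanSpace.proj (⟨3*H, by omega⟩ : Fin (3*H+1)) : EuclideanSpace ℝ (Fin (3*H+1)) →L[ℝ] ℝ)).hasFDerivAt.sub_const (2*α)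
  have h2 : HasFDerivAt (fun ψ : EuclideanSpace ℝ (Fin (3*H+1)) => (cp H ψ - 2*α)^2)
      ((2*(cp H φ - 2*α)) • ((EuclideanSpace.proj (⟨3*H, by omega⟩ : Fin (3*H+1)) : EuclideanSpace ℝ (Fin (3*H+1)) →L[ℝ] ℝ))) φ := by
    have := hproj.mul hproj
    have h2' : (2*(cp H φ - 2*α)) • (((EuclideanSpace.proj (⟨3*H, by omega⟩ : Fin (3*H+1)) : EuclideanSpace ℝ (Fin (3*H+1)) →L[ℝ] ℝ))) = (cp H φ - 2*α) • ((EuclideanSpace.proj (⟨3*H, by omega⟩ : Fin (3*H+1)) : EuclideanSpace ℝ (Fin (3*H+1)) →L[ℝ] ℝ)) + (cp H φ - 2*α) • ((EuclideanSpace.proj (⟨3*H, by omega⟩ : Fin (3*H+1)) : EuclideanSpace ℝ (Fin (3*H+1)) →L[ℝ] ℝ)) := by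
      rw [← add_smul]; ring_nf
    rw [h2']
    simp only [pow_two]; exact this
  have h3 := h1.add h2
  refine h3.congr_fderiv ?_; symm
  ext ψ
  simp only [ContinuousLinearMap.add_apply, ContinuousLinearMap.smul_apply, innerSL_apply_apply,
    smul_eq_mul, nsmul_eq_mul]
  rw [InnerProductSpace.toDual_apply_apply, inner_add_left, real_inner_smul_left, real_inner_smul_left,
    EuclideanSpace.inner_single_left]
  simp [cp]
  try ring

lemma cont_real : Continuous (fun x => realization H φ x - α) := by
  unfold realization
  fun_prop

lemma meas_actSet (j : Fin H) : MeasurableSet (actSet H φ j) := by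
  have : actSet H φ j = Set.Icc (0:ℝ) 1 ∩ {x | 0 < wp H φ j * x + bp H φ j} := rfl
  rw [this]
  exact measurableSet_Icc.inter (measurableSet_lt measurable_const (by fun_prop))

lemma integrableOn_actSet (j : Fin H) {g : ℝ → ℝ} (hg : Continuous g) :
    IntegrableOn g (actSet H φ j) := by
  apply (hg.integrableOn_Icc (a := (0:ℝ)) (b := 1)).mono_set
  intro x hx; exact hx.1

/-- key identity A -/
lemma keyA (j : Fin H) :
    wp H φ j * (∫ x in actSet H φ j, x * (realization H φ x - α))
      + bp H φ j * (∫ x in actSet H φ j, (realization H φ x - α))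
    = ∫ x in (0:ℝ)..1, max (wp H φ j * x + bp H φ j) 0 * (realization H φ x - α) := by
  have hN := cont_real H α φ
  have hi1 : IntegrableOn (fun x => wp H φ j * (x * (realization H φ x - α)))
      (actSet H φ j) volume := (integrableOn_actSet H φ j (by fun_prop)).const_mul _
  have hi2 : IntegrableOn (fun x => bp H φ j * (realization H φ x - α))
      (actSet H φ j) volume := (integrableOn_actSet H φ j hN).const_mul _
  have h1 : wp H φ j * (∫ x in actSet H φ j, x * (realization H φ x - α))
      + bp H φ j * (∫ x in actSet H φ j, (realization H φ x - α))
      = ∫ x in actSet H φ j, (wp H φ j * x + bp H φ j) * (realization H φ x - α) := by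
    have e1 : wp H φ j * ∫ x in actSet H φ j, x * (realization H φ x - α)
        = ∫ x in actSet H φ j, wp H φ j * (x * (realization H φ x - α)) :=
      (integral_const_mul _ _).symm
    have e2 : bp H φ j * ∫ x in actSet H φ j, (realization H φ x - α)
        = ∫ x in actSet H φ j, bp H φ j * (realization H φ x - α) :=
      (integral_const_mul _ _).symm
    rw [e1, e2, ← integral_add hi1 hi2]
    apply integral_congr_ae
    filter_upwards with x
    ring
  rw [h1]
  have h2 : ∫ x in actSet H φ j, (wp H φ j * x + bp H φ j) * (realization H φ x - α)
      = ∫ x in actSet H φ j, max (wp H φ j * x + bp H φ j) 0 * (realization H φ x - α) := by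
    apply setIntegral_congr_fun (meas_actSet H φ j)
    intro x hx
    dsimp only
    rw [max_eq_left hx.2.le]
  rw [h2]
  rw [intervalIntegral.integral_of_le zero_le_one, ← integral_Icc_eq_integral_Ioc]
  have hsplit : Set.Icc (0:ℝ) 1 = actSet H φ j ∪ (Set.Icc (0:ℝ) 1 \ actSet H φ j) := by
    rw [Set.union_diff_cancel]; intro x hx; exact hx.1
  rw [hsplit, setIntegral_union]
  · have : ∫ x in Set.Icc (0:ℝ) 1 \ actSet H φ j,
        max (wp H φ j * x + bp H φ j) 0 * (realization H φ x - α) = 0 := by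
      apply setIntegral_eq_zero_of_forall_eq_zero
      intro x hx
      have : wp H φ j * x + bp H φ j ≤ 0 := by
        by_contra h
        exact hx.2 ⟨hx.1, lt_of_not_ge h⟩
      rw [max_eq_right this, zero_mul]
    rw [this, add_zero]
  · exact Set.disjoint_sdiff_right
  · exact measurableSet_Icc.diff (meas_actSet H φ j)
  · exact integrableOn_actSet H φ j (by fun_prop)
  · apply ((Continuous.integrableOn_Icc (a := (0:ℝ)) (b := 1) (by fun_prop))).mono_set
    exact Set.diff_subset

/-- key identity B : risk expansion -/
lemma keyB :
    risk H α φ = (cp H φ - α) * (∫ x in (0:ℝ)..1, (realization H φ x - α))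
      + ∑ j : Fin H, vp H φ j *
          ∫ x in (0:ℝ)..1, max (wp H φ j * x + bp H φ j) 0 * (realization H φ x - α) := by
  have hN := cont_real H α φ
  have hint : ∀ g : ℝ → ℝ, Continuous g → IntervalIntegrable g volume 0 1 :=
    fun g hg => hg.intervalIntegrable 0 1
  unfold risk
  have hexp : ∀ x : ℝ, (realization H φ x - α)^2
      = (cp H φ - α) * (realization H φ x - α)
        + ∑ j : Fin H, vp H φ j * (max (wp H φ j * x + bp H φ j) 0 * (realization H φ x - α)) := by
    intro x
    have : realization H φ x - α
        = (cp H φ - α) + ∑ j : Fin H, vp H φ j * max (wp H φ j * x + bp H φ j) 0 := by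
      unfold realization; ring
    calc (realization H φ x - α)^2
        = ((cp H φ - α) + ∑ j : Fin H, vp H φ j * max (wp H φ j * x + bp H φ j) 0)
          * (realization H φ x - α) := by rw [← this]; ring
      _ = _ := by rw [add_mul, Finset.sum_mul]; congr 1; apply Finset.sum_congr rfl
                  intro j _; ring
  rw [intervalIntegral.integral_congr (fun x _ => hexp x)]
  have hj : ∀ j ∈ (Finset.univ : Finset (Fin H)), IntervalIntegrable
      (fun x => vp H φ j * (max (wp H φ j * x + bp H φ j) 0 * (realization H φ x - α)))
      volume 0 1 := fun j _ => hint _ (by fun_prop)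
  rw [intervalIntegral.integral_add (hint _ (by fun_prop))
      (hint _ (continuous_finset_sum _ (fun j _ => by fun_prop))),
    intervalIntegral.integral_const_mul, intervalIntegral.integral_finset_sum hj]
  congr 1
  apply Finset.sum_congr rfl
  intro j _
  rw [intervalIntegral.integral_const_mul]

lemma grad_eval1 (j : Fin H) : grad H α φ ⟨j.1, by omega⟩
    = 2 * vp H φ j * ∫ x in actSet H φ j, x * (realization H φ x - α) := by
  simp only [grad, PiLp.toLp_apply]
  rw [dif_pos j.2]

lemma grad_eval2 (j : Fin H) : grad H α φ ⟨H + j.1, by omega⟩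
    = 2 * vp H φ j * ∫ x in actSet H φ j, (realization H φ x - α) := by
  simp only [grad, PiLp.toLp_apply]
  rw [dif_neg (by omega), dif_pos (by omega : H + j.1 < 2*H)]
  have hj : H + j.1 - H = j.1 := by omega
  simp only [hj, Fin.eta]

lemma grad_eval3 (j : Fin H) : grad H α φ ⟨2*H + j.1, by omega⟩
    = 2 * ∫ x in (0:ℝ)..1, max (wp H φ j * x + bp H φ j) 0 * (realization H φ x - α) := by
  simp only [grad, PiLp.toLp_apply]
  rw [dif_neg (by omega), dif_neg (by omega), dif_pos (by omega : 2*H + j.1 < 3*H)]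
  have hj : 2*H + j.1 - 2*H = j.1 := by omega
  simp only [hj, Fin.eta]

lemma grad_eval4 : grad H α φ ⟨3*H, by omega⟩
    = 2 * ∫ x in (0:ℝ)..1, (realization H φ x - α) := by
  simp only [grad, PiLp.toLp_apply]
  rw [dif_neg (by omega), dif_neg (by omega), dif_neg (by omega)]

lemma sum_split (f : EuclideanSpace ℝ (Fin (3*H+1))) :
    ∑ i : Fin (3*H+1), φ i * f i
    = (∑ j : Fin H, (wp H φ j * f ⟨j.1, by omega⟩ + bp H φ j * f ⟨H + j.1, by omega⟩
        + vp H φ j * f ⟨2*H + j.1, by omega⟩)) + cp H φ * f ⟨3*H, by omega⟩ := by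
  classical
  set F : ℕ → ℝ := fun i => if h : i < 3*H+1 then φ ⟨i,h⟩ * f ⟨i,h⟩ else 0 with hF
  have h0 : ∑ i : Fin (3*H+1), φ i * f i = ∑ i ∈ Finset.range (3*H+1), F i := by
    rw [← Fin.sum_univ_eq_sum_range]
    apply Finset.sum_congr rfl
    intro i _
    simp only [hF, i.2, dif_pos, Fin.eta]
  rw [h0, Finset.sum_range_succ]
  have a1 : ∑ i ∈ Finset.Ico H (2*H), F i = ∑ i ∈ Finset.range H, F (H + i) := by
    rw [Finset.sum_Ico_eq_sum_range]
    exact Finset.sum_congr (by congr 1; omega) (fun i _ => rfl)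
  have a2 : ∑ i ∈ Finset.Ico (2*H) (3*H), F i = ∑ i ∈ Finset.range H, F (2*H + i) := by
    rw [Finset.sum_Ico_eq_sum_range]
    exact Finset.sum_congr (by congr 1; omega) (fun i _ => rfl)
  have h1 : ∑ i ∈ Finset.range (3*H), F i
      = ∑ i ∈ Finset.range H, F i + (∑ i ∈ Finset.range H, F (H + i)
        + ∑ i ∈ Finset.range H, F (2*H + i)) := by
    rw [Finset.range_eq_Ico, ← Finset.sum_Ico_consecutive F (by omega : 0 ≤ H) (by omega : H ≤ 3*H),
      ← Finset.sum_Ico_consecutive F (by omega : H ≤ 2*H) (by omega : 2*H ≤ 3*H),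
      ← Finset.range_eq_Ico, a1, a2]
  rw [h1]
  have e1 : ∀ j : Fin H, F j.1 = wp H φ j * f ⟨j.1, by omega⟩ := by
    intro j
    simp only [hF, dif_pos (by omega : j.1 < 3*H+1)]
    rfl
  have e2 : ∀ j : Fin H, F (H + j.1) = bp H φ j * f ⟨H + j.1, by omega⟩ := by
    intro j
    simp only [hF, dif_pos (by omega : H + j.1 < 3*H+1)]
    rfl
  have e3 : ∀ j : Fin H, F (2*H + j.1) = vp H φ j * f ⟨2*H + j.1, by omega⟩ := by
    intro j
    simp only [hF, dif_pos (by omega : 2*H + j.1 < 3*H+1)]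
    rfl
  have e4 : F (3*H) = cp H φ * f ⟨3*H, by omega⟩ := by
    simp only [hF, dif_pos (by omega : 3*H < 3*H+1)]
    rfl
  rw [e4]
  congr 1
  rw [Finset.sum_add_distrib, Finset.sum_add_distrib,
    ← Fin.sum_univ_eq_sum_range (fun i => F i) H,
    ← Fin.sum_univ_eq_sum_range (fun i => F (H + i)) H,
    ← Fin.sum_univ_eq_sum_range (fun i => F (2*H + i)) H, add_assoc]
  congr 1
  · exact Finset.sum_congr rfl (fun j _ => e1 j)
  congr 1
  · exact Finset.sum_congr rfl (fun j _ => e2 j)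
  · exact Finset.sum_congr rfl (fun j _ => e3 j)

end Aux

theorem inner_gradV_grad_eq (H : ℕ) (hH : 0 < H) (α : ℝ)
    (φ : EuclideanSpace ℝ (Fin (3*H+1))) :
    (inner ℝ (gradient (lyap H α) φ) (grad H α φ) : ℝ) = 8 * risk H α φ := by
  rw [grad_lyap H α φ, inner_add_left, real_inner_smul_left, real_inner_smul_left,
    EuclideanSpace.inner_single_left]
  have hip : (inner ℝ φ (grad H α φ) : ℝ) = ∑ i, φ i * grad H α φ i := by
    simp [PiLp.inner_apply, RCLike.inner_apply, conj_trivial, mul_comm]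
  rw [hip, sum_split H φ (grad H α φ), grad_eval4 H α φ]
  have hterm : ∀ j : Fin H,
      wp H φ j * grad H α φ ⟨j.1, by omega⟩ + bp H φ j * grad H α φ ⟨H + j.1, by omega⟩
        + vp H φ j * grad H α φ ⟨2*H + j.1, by omega⟩
      = 4 * (vp H φ j *
          ∫ x in (0:ℝ)..1, max (wp H φ j * x + bp H φ j) 0 * (realization H φ x - α)) := by
    intro j
    rw [grad_eval1 H α φ j, grad_eval2 H α φ j, grad_eval3 H α φ j]
    linear_combination (2 * vp H φ j) * keyA H α φ j
  rw [Finset.sum_congr rfl (fun j _ => hterm j), keyB H α φ, ← Finset.mul_sum]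
  simp only [conj_trivial]
  ring
end
end

section
/- In the one-hidden-layer ReLU ANN setting with constant target α, define V_1(φ) = c² − 2αc + Σ_{j=1}^H v_j². Then ⟨(∇V_1)(φ), G(φ)⟩ = 4 L_∞(φ) for every φ ∈ ℝ^{3H+1}. -/
open MeasureTheory

noncomputable section

theorem inner_gradV1_grad_eq (H : ℕ) (hH : 0 < H) (α : ℝ)
    (V1 : EuclideanSpace ℝ (Fin (3*H+1)) → ℝ)
    (hV1 : ∀ φ, V1 φ = (cp H φ)^2 - 2 * α * cp H φ + ∑ j : Fin H, (vp H φ j)^2)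
    (φ : EuclideanSpace ℝ (Fin (3*H+1))) :
    (inner ℝ (gradient V1 φ) (grad H α φ) : ℝ) = 4 * risk H α φ := by
  classical
  set i0 : Fin (3*H+1) := ⟨3*H, by omega⟩ with hi0
  set ij : Fin H → Fin (3*H+1) := fun j => ⟨2*H + j.1, by omega⟩ with hij
  -- derivatives of coordinates
  have hc : HasFDerivAt (fun ψ : EuclideanSpace ℝ (Fin (3*H+1)) => cp H ψ) ((EuclideanSpace.proj i0 : EuclideanSpace ℝ (Fin (3*H+1)) →L[ℝ] ℝ)) φ := by
    have h := (EuclideanSpace.proj (𝕜 := ℝ) i0).hasFDerivAt (x := φ)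
    exact h
  have hv : ∀ j : Fin H, HasFDerivAt (fun ψ : EuclideanSpace ℝ (Fin (3*H+1)) => vp H ψ j) ((EuclideanSpace.proj (ij j) : EuclideanSpace ℝ (Fin (3*H+1)) →L[ℝ] ℝ)) φ := by
    intro j
    have h := (EuclideanSpace.proj (𝕜 := ℝ) (ij j)).hasFDerivAt (x := φ)
    exact h
  have hV1' : V1 = fun ψ : EuclideanSpace ℝ (Fin (3*H+1)) =>
      ((fun ψ : EuclideanSpace ℝ (Fin (3*H+1)) => cp H ψ) ψ * (fun ψ : EuclideanSpace ℝ (Fin (3*H+1)) => cp H ψ) ψ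
        - 2*α*(fun ψ : EuclideanSpace ℝ (Fin (3*H+1)) => cp H ψ) ψ)
      + ∑ j : Fin H, (fun ψ : EuclideanSpace ℝ (Fin (3*H+1)) => vp H ψ j) ψ * (fun ψ : EuclideanSpace ℝ (Fin (3*H+1)) => vp H ψ j) ψ := by
    funext ψ; rw [hV1]; simp only [pow_two]
  have h1 := (((hc.mul hc).sub (hc.const_mul (2*α))).add
      (HasFDerivAt.sum (fun (j : Fin H) (_ : j ∈ Finset.univ) => (hv j).mul (hv j))))
  replace h1 := h1.congr_of_eventuallyEq (f₁ := V1) (Filter.Eventually.of_forall fun ψ => by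
    rw [hV1']; simp [Finset.sum_apply])
  -- the inner product equals the Fréchet derivative applied to grad
  have hkey : (inner ℝ (gradient V1 φ) (grad H α φ) : ℝ) = fderiv ℝ V1 φ (grad H α φ) := by
    rw [show gradient V1 φ = (InnerProductSpace.toDual ℝ (EuclideanSpace ℝ (Fin (3*H+1)))).symm (fderiv ℝ V1 φ) from rfl]
    exact InnerProductSpace.toDual_symm_apply
  rw [hkey, h1.fderiv]
  simp only [ContinuousLinearMap.add_apply, ContinuousLinearMap.sub_apply,
    ContinuousLinearMap.smul_apply, ContinuousLinearMap.coe_sum', Finset.sum_apply,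
    PiLp.proj_apply, smul_eq_mul]
  -- now evaluate grad at the relevant indices
  have e1 : grad H α φ i0 = 2 * ∫ x in (0:ℝ)..1, (realization H φ x - α) := by
    have n1 : ¬ ((i0 : ℕ) < H) := by show ¬ (3*H < H); omega
    have n2 : ¬ ((i0 : ℕ) < 2*H) := by show ¬ (3*H < 2*H); omega
    have n3 : ¬ ((i0 : ℕ) < 3*H) := by show ¬ (3*H < 3*H); omega
    simp only [grad]
    rw [dif_neg n1, dif_neg n2, dif_neg n3]
  have e2 : ∀ j : Fin H, grad H α φ (ij j)
      = 2 * ∫ x in (0:ℝ)..1, max (wp H φ j * x + bp H φ j) 0 * (realization H φ x - α) := by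
    intro j
    have hjH := j.isLt
    have n1 : ¬ (((ij j) : ℕ) < H) := by show ¬ (2*H + j.1 < H); omega
    have n2 : ¬ (((ij j) : ℕ) < 2*H) := by show ¬ (2*H + j.1 < 2*H); omega
    have n3 : ((ij j) : ℕ) < 3*H := by show 2*H + j.1 < 3*H; omega
    simp only [grad]
    rw [dif_neg n1, dif_neg n2, dif_pos n3]
    have hsub : (⟨((ij j) : ℕ) - 2*H, by omega⟩ : Fin H) = j := by
      ext
      show 2*H + j.1 - 2*H = j.1
      omega
    rw [hsub]
  rw [e1]
  rw [Finset.sum_congr rfl (fun j _ => by rw [e2 j])]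
  -- analytic identity
  have hcontN : Continuous (realization H φ) := by
    unfold realization
    exact continuous_const.add (continuous_finset_sum _ fun j _ =>
      continuous_const.mul (((continuous_const.mul continuous_id).add continuous_const).max
        continuous_const))
  have hcontf : Continuous (fun x => realization H φ x - α) := hcontN.sub continuous_const
  have hcontm : ∀ j : Fin H, Continuous (fun x =>
      max (wp H φ j * x + bp H φ j) 0 * (realization H φ x - α)) := fun j =>
    (((continuous_const.mul continuous_id).add continuous_const).max continuous_const).mul hcontf
  have key : (∫ x in (0:ℝ)..1, (realization H φ x - α) ^ 2)
      = (cp H φ - α) * (∫ x in (0:ℝ)..1, (realization H φ x - α))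
        + ∑ j : Fin H, vp H φ j * ∫ x in (0:ℝ)..1,
            max (wp H φ j * x + bp H φ j) 0 * (realization H φ x - α) := by
    rw [← intervalIntegral.integral_const_mul]
    rw [Finset.sum_congr rfl (fun (j : Fin H) _ =>
      (intervalIntegral.integral_const_mul (vp H φ j)
        (fun x => max (wp H φ j * x + bp H φ j) 0 * (realization H φ x - α))).symm)]
    rw [← intervalIntegral.integral_finset_sum (f := fun j x => vp H φ j * (max (wp H φ j * x + bp H φ j) 0 * (realization H φ x - α))) (fun j _ =>
      ((continuous_const.mul (hcontm j)).intervalIntegrable _ _))]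
    rw [← intervalIntegral.integral_add (f := fun x => (cp H φ - α) * (realization H φ x - α))
      (g := fun x => ∑ j : Fin H, vp H φ j * (max (wp H φ j * x + bp H φ j) 0 * (realization H φ x - α)))
      ((continuous_const.mul hcontf).intervalIntegrable _ _)
      ((continuous_finset_sum _ (fun j _ => continuous_const.mul (hcontm j))).intervalIntegrable _ _)]
    apply intervalIntegral.integral_congr
    intro x _
    have hx : realization H φ x - α
        = (cp H φ - α) + ∑ j : Fin H, vp H φ j * max (wp H φ j * x + bp H φ j) 0 := by
      simp only [realization]; ring
    calc (realization H φ x - α) ^ 2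
        = ((cp H φ - α) + ∑ j : Fin H, vp H φ j * max (wp H φ j * x + bp H φ j) 0)
            * (realization H φ x - α) := by rw [← hx]; ring
      _ = (cp H φ - α) * (realization H φ x - α)
          + ∑ j : Fin H, vp H φ j
              * (max (wp H φ j * x + bp H φ j) 0 * (realization H φ x - α)) := by
          rw [add_mul, Finset.sum_mul]
          congr 1
          exact Finset.sum_congr rfl fun j _ => by ring
  have hsum : ∑ j : Fin H,
        (vp H φ j * (2 * ∫ x in (0:ℝ)..1,
            max (wp H φ j * x + bp H φ j) 0 * (realization H φ x - α))
          + vp H φ j * (2 * ∫ x in (0:ℝ)..1,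
            max (wp H φ j * x + bp H φ j) 0 * (realization H φ x - α)))
      = 4 * ∑ j : Fin H, vp H φ j * ∫ x in (0:ℝ)..1,
          max (wp H φ j * x + bp H φ j) 0 * (realization H φ x - α) := by
    rw [Finset.mul_sum]
    exact Finset.sum_congr rfl fun j _ => by ring
  have hc0 : φ i0 = cp H φ := rfl
  have hv0 : ∀ j : Fin H, φ (ij j) = vp H φ j := fun j => rfl
  rw [risk, hsum, key]
  ring
end
end
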